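/- Let G = (V, E) be a graph with nonnegative, pairwise-distinct edge weights, let p ∈ [0,1], and let E' ⊆ E contain each edge independently with probability p. Consider the greedy-based edge-arrival algorithm: an edge e ∈ E \ E' is a candidate if e ∈ Greedy(G[E' ∪ {e}]); the edges of E \ E' are processed in some order and a candidate edge is added to the output matching M if both its endpoints are currently unmatched in M. Then for every rule assigning an arrival order to E \ E' (possibly depending on E'), E[w(M)] ≥ (p(1−p)/2) · E[w(Greedy(G[E']))]. -/

import Mathlib

open Finset

open scoped Classical

/-- Greedy matching with fuel: repeatedly pick the maximum-weight remaining edge and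
discard all edges conflicting with it. -/
noncomputable def greedyAux {α : Type*} [DecidableEq α] (w : α → ℝ)
    (conflict : α → α → Prop) : ℕ → Finset α → Finset α
  | 0, _ => ∅
  | n + 1, F =>
    if h : F.Nonempty then
      let e := (F.exists_max_image w h).choose
      insert e (greedyAux w conflict n (F.filter fun f => ¬ conflict e f))
    else ∅

/-- The greedy matching of an edge set `F`: process edges in decreasing order of weight,
adding an edge whenever it conflicts with no previously added edge. -/
noncomputable def greedy {α : Type*} [DecidableEq α] (w : α → ℝ)
    (conflict : α → α → Prop) (F : Finset α) : Finset α :=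
  greedyAux w conflict F.card F

/-- Two edges of a general graph (given as ordered pairs of endpoints) conflict iff
they share an endpoint. -/
def gconf {V : Type*} (e f : V × V) : Prop :=
  e.1 = f.1 ∨ e.1 = f.2 ∨ e.2 = f.1 ∨ e.2 = f.2

/-- Expectation of `f` over a random subset of `s` containing each element
independently with probability `p`. -/
noncomputable def expSubsets {ι : Type*} (p : ℝ) (s : Finset ι) (f : Finset ι → ℝ) : ℝ :=
  ∑ A ∈ s.powerset, p ^ A.card * (1 - p) ^ (s.card - A.card) * f A

/-- A set of edges is a matching if no two distinct edges conflict. -/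
def isMatching {α : Type*} (conflict : α → α → Prop) (M : Finset α) : Prop :=
  ∀ e ∈ M, ∀ f ∈ M, e ≠ f → ¬ conflict e f

/-- `OPT`: the maximum total weight of a matching contained in the edge set `E`. -/
noncomputable def optWeight {α : Type*} (w : α → ℝ) (conflict : α → α → Prop)
    (E : Finset α) : ℝ :=
  (E.powerset.filter fun M => isMatching conflict M).sup'
    ⟨∅, Finset.mem_filter.mpr ⟨Finset.empty_mem_powerset _,
        fun e he => absurd he (Finset.notMem_empty e)⟩⟩
    (fun M => ∑ e ∈ M, w e)

/-- One step of the greedy-based edge-arrival algorithm with sample `E'`: the arriving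
edge `e` is a candidate if `e ∈ Greedy(G[E' ∪ {e}])`, and a candidate is added if both
of its endpoints are currently unmatched. -/
noncomputable def stepE {V : Type*} [DecidableEq V] (w : V × V → ℝ)
    (E' : Finset (V × V)) (M : Finset (V × V)) (e : V × V) : Finset (V × V) :=
  M ∪ (greedy w gconf (insert e E')).filter
      (fun f => f = e ∧ ∀ g ∈ M, ¬ gconf g f)

/-- The output matching of the greedy-based edge-arrival algorithm with sample `E'`,
when the online edges arrive in the order given by `order`. -/
noncomputable def runE {V : Type*} [DecidableEq V] (w : V × V → ℝ)
    (E' : Finset (V × V)) (order : List (V × V)) : Finset (V × V) :=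
  order.foldl (stepE w E') ∅

section GreedyBasics

variable {α : Type*} [DecidableEq α] (w : α → ℝ) (c : α → α → Prop)

lemma greedyAux_zero (F : Finset α) : greedyAux w c 0 F = ∅ := rfl

lemma greedyAux_empty (n : ℕ) : greedyAux w c n (∅ : Finset α) = ∅ := by
  cases n with
  | zero => rfl
  | succ n => simp [greedyAux]

lemma greedyAux_succ (n : ℕ) (F : Finset α) (h : F.Nonempty) :
    greedyAux w c (n+1) F =
      insert (F.exists_max_image w h).choose
        (greedyAux w c n (F.filter fun f => ¬ c (F.exists_max_image w h).choose f)) := by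
  simp [greedyAux, dif_pos h]

lemma greedyAux_fuel (hrefl : ∀ a, c a a) :
    ∀ n m (F : Finset α), F.card ≤ n → F.card ≤ m →
      greedyAux w c n F = greedyAux w c m F := by
  intro n
  induction n with
  | zero =>
    intro m F hn _
    have : F = ∅ := Finset.card_eq_zero.mp (Nat.le_zero.mp hn)
    subst this
    simp [greedyAux_empty]
  | succ n ih =>
    intro m F hn hm
    by_cases hF : F.Nonempty
    · obtain ⟨m', rfl⟩ : ∃ m', m = m' + 1 := by
        have : 1 ≤ m := le_trans (Finset.card_pos.mpr hF) hm
        exact ⟨m - 1, by omega⟩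
      rw [greedyAux_succ w c n F hF, greedyAux_succ w c m' F hF]
      set e := (F.exists_max_image w hF).choose with he
      have hemem : e ∈ F := (F.exists_max_image w hF).choose_spec.1
      have hcard : (F.filter fun f => ¬ c e f).card < F.card := by
        apply Finset.card_lt_card
        constructor
        · exact Finset.filter_subset _ _
        · intro hsub
          have := hsub hemem
          rw [Finset.mem_filter] at this
          exact this.2 (hrefl e)
      congr 1
      exact ih m' _ (by omega) (by omega)
    · rw [Finset.not_nonempty_iff_eq_empty] at hF
      subst hF
      simp [greedyAux_empty]

lemma greedy_empty : greedy w c (∅ : Finset α) = ∅ := rfl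

/-- Unfolding lemma for `greedy`. -/
lemma greedy_unfold (hrefl : ∀ a, c a a) {F : Finset α} (h : F.Nonempty) :
    ∃ m ∈ F, (∀ f ∈ F, w f ≤ w m) ∧
      greedy w c F = insert m (greedy w c (F.filter fun f => ¬ c m f)) := by
  refine ⟨(F.exists_max_image w h).choose, (F.exists_max_image w h).choose_spec.1,
    (F.exists_max_image w h).choose_spec.2, ?_⟩
  unfold greedy
  obtain ⟨k, hk⟩ : ∃ k, F.card = k + 1 := by
    have : 1 ≤ F.card := Finset.card_pos.mpr h
    exact ⟨F.card - 1, by omega⟩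
  rw [hk, greedyAux_succ w c k F h]
  congr 1
  apply greedyAux_fuel w c hrefl
  · have hsub : (F.filter fun f => ¬ c (F.exists_max_image w h).choose f) ⊆
        F.erase (F.exists_max_image w h).choose := by
      intro x hx
      rw [Finset.mem_filter] at hx
      rw [Finset.mem_erase]
      refine ⟨?_, hx.1⟩
      rintro rfl
      exact hx.2 (hrefl _)
    calc (F.filter fun f => ¬ c (F.exists_max_image w h).choose f).card
        ≤ (F.erase (F.exists_max_image w h).choose).card := Finset.card_le_card hsub
      _ = F.card - 1 := Finset.card_erase_of_mem (F.exists_max_image w h).choose_spec.1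
      _ ≤ k := by omega
  · exact le_rfl

lemma greedy_subset_aux (hrefl : ∀ a, c a a) :
    ∀ (n : ℕ) (F : Finset α), F.card = n → greedy w c F ⊆ F := by
  intro n
  induction n using Nat.strong_induction_on with
  | _ n ih =>
  intro F hn
  by_cases hF : F.Nonempty
  · obtain ⟨m, hm, hmax, heq⟩ := greedy_unfold w c hrefl hF
    rw [heq]
    intro x hx
    rcases Finset.mem_insert.mp hx with rfl | hx
    · exact hm
    · have hcard : (F.filter fun f => ¬ c m f).card < n := by
        subst hn
        apply Finset.card_lt_card
        refine ⟨Finset.filter_subset _ _, fun hsub => ?_⟩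
        have := hsub hm
        rw [Finset.mem_filter] at this
        exact this.2 (hrefl m)
      exact Finset.filter_subset _ _ (ih _ hcard _ rfl hx)
  · rw [Finset.not_nonempty_iff_eq_empty] at hF
    subst hF
    rw [greedy_empty]

lemma greedy_subset (hrefl : ∀ a, c a a) (F : Finset α) : greedy w c F ⊆ F :=
  greedy_subset_aux w c hrefl F.card F rfl

/-- Uniqueness of the maximiser under injective weights. -/
lemma max_unique {w : α → ℝ} {F : Finset α} (hinj : Set.InjOn w ↑F) {m m' : α}
    (hm : m ∈ F) (hm' : m' ∈ F) (h1 : ∀ f ∈ F, w f ≤ w m) (h2 : ∀ f ∈ F, w f ≤ w m') :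
    m = m' :=
  hinj hm hm' (le_antisymm (h2 m hm) (h1 m' hm'))

end GreedyBasics
set_option linter.unusedSectionVars false

section GreedyStruct

variable {α : Type*} [DecidableEq α] (w : α → ℝ) (c : α → α → Prop)

/-- Greedy commutes with restriction to heavy elements. -/
lemma greedy_filter_aux (hrefl : ∀ a, c a a) :
    ∀ (n : ℕ) (F : Finset α), F.card = n → Set.InjOn w ↑F → ∀ (t : ℝ),
      greedy w c (F.filter fun f => t ≤ w f) = (greedy w c F).filter fun f => t ≤ w f := by
  intro n
  induction n using Nat.strong_induction_on with
  | _ n ih =>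
  intro F hn hinj t
  by_cases hF : F.Nonempty
  · obtain ⟨m, hm, hmax, heq⟩ := greedy_unfold w c hrefl hF
    set F1 := F.filter fun f => ¬ c m f with hF1
    have hcard1 : F1.card < n := by
      subst hn
      apply Finset.card_lt_card
      refine ⟨Finset.filter_subset _ _, fun hsub => ?_⟩
      have := hsub hm
      rw [Finset.mem_filter] at this
      exact this.2 (hrefl m)
    by_cases ht : t ≤ w m
    · have hFfil : (F.filter fun f => t ≤ w f).Nonempty :=
        ⟨m, Finset.mem_filter.mpr ⟨hm, ht⟩⟩
      obtain ⟨m', hm', hmax', heq'⟩ := greedy_unfold w c hrefl hFfil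
      have hmm : m' = m := by
        exact max_unique (hinj.mono (by exact_mod_cast Finset.filter_subset _ F))
          hm' (Finset.mem_filter.mpr ⟨hm, ht⟩) hmax'
          (fun f hf => hmax f (Finset.filter_subset _ _ hf))
      subst hmm
      rw [heq', heq]
      have hcomm : ((F.filter fun f => t ≤ w f).filter fun f => ¬ c m' f) =
          F1.filter fun f => t ≤ w f := by
        rw [hF1, Finset.filter_filter, Finset.filter_filter]
        apply Finset.filter_congr
        intro x _
        constructor
        · rintro ⟨h1, h2⟩; exact ⟨h2, h1⟩
        · rintro ⟨h1, h2⟩; exact ⟨h2, h1⟩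
      rw [hcomm, ih _ hcard1 F1 rfl (hinj.mono (by exact_mod_cast Finset.filter_subset _ F)) t,
        Finset.filter_insert, if_pos ht]
    · have h1 : (F.filter fun f => t ≤ w f) = ∅ := by
        apply Finset.filter_false_of_mem
        intro x hx h
        exact ht (le_trans h (hmax x hx))
      have h2 : ((greedy w c F).filter fun f => t ≤ w f) = ∅ := by
        apply Finset.filter_false_of_mem
        intro x hx h
        exact ht (le_trans h (hmax x (greedy_subset w c hrefl F hx)))
      rw [h1, h2, greedy_empty]
  · rw [Finset.not_nonempty_iff_eq_empty] at hF
    subst hF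
    simp [greedy_empty]

lemma greedy_filter (hrefl : ∀ a, c a a) {F : Finset α} (hinj : Set.InjOn w ↑F) (t : ℝ) :
    greedy w c (F.filter fun f => t ≤ w f) = (greedy w c F).filter fun f => t ≤ w f :=
  greedy_filter_aux w c hrefl F.card F rfl hinj t

/-- Inserting a minimum-weight element. -/
lemma greedy_insert_min_aux (hrefl : ∀ a, c a a) :
    ∀ (n : ℕ) (B : Finset α), B.card = n → ∀ (a : α), Set.InjOn w ↑(insert a B) →
      (∀ b ∈ B, w a < w b) →
      greedy w c (insert a B) =
        if (∀ m ∈ greedy w c B, ¬ c m a) then insert a (greedy w c B)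
        else greedy w c B := by
  intro n
  induction n using Nat.strong_induction_on with
  | _ n ih =>
  intro B hn a hinj hlt
  by_cases hB : B.Nonempty
  · obtain ⟨m, hm, hmax, heq⟩ := greedy_unfold w c hrefl hB
    set B1 := B.filter fun f => ¬ c m f with hB1
    have hsub1 : B1 ⊆ B := Finset.filter_subset _ _
    have hcard1 : B1.card < n := by
      subst hn
      apply Finset.card_lt_card
      refine ⟨hsub1, fun hsub => ?_⟩
      have := hsub hm
      rw [Finset.mem_filter] at this
      exact this.2 (hrefl m)
    -- the max of `insert a B` is `m`
    have hne : (insert a B).Nonempty := ⟨a, Finset.mem_insert_self a B⟩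
    obtain ⟨m', hm', hmax', heq'⟩ := greedy_unfold w c hrefl hne
    have hmm : m' = m := by
      rcases Finset.mem_insert.mp hm' with h0 | hm'B
      · exfalso
        rw [h0] at hmax'
        exact absurd (hmax' m (Finset.mem_insert_of_mem hm)) (not_le.mpr (hlt m hm))
      · exact max_unique hinj hm' (Finset.mem_insert_of_mem hm) hmax'
          (fun f hf => by
            rcases Finset.mem_insert.mp hf with h0 | hfB
            · rw [h0]; exact le_of_lt (hlt m hm)
            · exact hmax f hfB)
    subst hmm
    rw [heq]
    have hfilter : ((insert a B).filter fun f => ¬ c m' f) =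
        if ¬ c m' a then insert a B1 else B1 := by
      rw [Finset.filter_insert]
    by_cases hca : c m' a
    · rw [heq', hfilter, if_neg (by simpa using hca)]
      rw [if_neg]
      push_neg
      exact ⟨m', Finset.mem_insert_self _ _, hca⟩
    · rw [heq', hfilter, if_pos (by simpa using hca)]
      have hinj1 : Set.InjOn w ↑(insert a B1) := by
        apply hinj.mono
        intro x hx
        simp only [Finset.coe_insert, Set.mem_insert_iff, Finset.mem_coe] at hx ⊢
        rcases hx with rfl | hx
        · exact Or.inl rfl
        · exact Or.inr (hsub1 hx)
      have hlt1 : ∀ b ∈ B1, w a < w b := fun b hb => hlt b (hsub1 hb)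
      rw [ih _ hcard1 B1 rfl a hinj1 hlt1]
      by_cases h1 : ∀ m'' ∈ greedy w c B1, ¬ c m'' a
      · rw [if_pos h1, if_pos, Finset.insert_comm]
        intro m'' hm''
        rcases Finset.mem_insert.mp hm'' with rfl | hmem
        · exact hca
        · exact h1 m'' hmem
      · rw [if_neg h1, if_neg]
        push_neg at h1 ⊢
        obtain ⟨m'', hmem, hc⟩ := h1
        exact ⟨m'', Finset.mem_insert_of_mem hmem, hc⟩
  · rw [Finset.not_nonempty_iff_eq_empty] at hB
    subst hB
    have h1 : greedy w c ({a} : Finset α) = {a} := by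
      obtain ⟨m, hm, _, heq⟩ := greedy_unfold w c hrefl (Finset.singleton_nonempty a)
      rw [Finset.mem_singleton] at hm
      subst hm
      rw [heq]
      have : ({m} : Finset α).filter (fun f => ¬ c m f) = ∅ := by
        apply Finset.filter_false_of_mem
        intro x hx
        rw [Finset.mem_singleton] at hx
        subst hx
        simp [hrefl x]
      rw [this, greedy_empty]
      rfl
    have hcond : (∀ m ∈ greedy w c (∅ : Finset α), ¬ c m a) := by
      rw [greedy_empty]
      intro m hm
      exact absurd hm (Finset.notMem_empty m)
    rw [if_pos hcond, greedy_empty]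
    exact h1

lemma greedy_insert_min (hrefl : ∀ a, c a a) {B : Finset α} {a : α}
    (hinj : Set.InjOn w ↑(insert a B)) (hlt : ∀ b ∈ B, w a < w b) :
    greedy w c (insert a B) =
      if (∀ m ∈ greedy w c B, ¬ c m a) then insert a (greedy w c B)
      else greedy w c B :=
  greedy_insert_min_aux w c hrefl B.card B rfl a hinj hlt

lemma mem_greedy_insert_min (hrefl : ∀ a, c a a) {B : Finset α} {a : α}
    (hinj : Set.InjOn w ↑(insert a B)) (hlt : ∀ b ∈ B, w a < w b) :
    a ∈ greedy w c (insert a B) ↔ ∀ m ∈ greedy w c B, ¬ c m a := by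
  have haB : a ∉ B := fun h => lt_irrefl _ (hlt a h)
  rw [greedy_insert_min w c hrefl hinj hlt]
  by_cases h : ∀ m ∈ greedy w c B, ¬ c m a
  · rw [if_pos h]
    exact ⟨fun _ => h, fun _ => Finset.mem_insert_self a _⟩
  · rw [if_neg h]
    constructor
    · intro hmem
      exact absurd (greedy_subset w c hrefl B hmem) haB
    · intro h'
      exact absurd h' h

/-- Heavier-prefix stability: an element of `greedy B` stays in greedy after
adding lighter elements. -/
lemma mem_greedy_union_lighter (hrefl : ∀ a, c a a) {B S : Finset α} {t : ℝ}
    (hinj : Set.InjOn w ↑(B ∪ S)) (hB : ∀ b ∈ B, t ≤ w b) (hS : ∀ s ∈ S, w s < t)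
    {f : α} (hf : f ∈ greedy w c B) : f ∈ greedy w c (B ∪ S) := by
  have hfil : (B ∪ S).filter (fun g => t ≤ w g) = B := by
    ext x
    simp only [Finset.mem_filter, Finset.mem_union]
    constructor
    · rintro ⟨h1 | h1, h2⟩
      · exact h1
      · exact absurd h2 (not_le.mpr (hS x h1))
    · intro hx
      exact ⟨Or.inl hx, hB x hx⟩
  have := greedy_filter w c hrefl hinj t
  rw [hfil] at this
  rw [this] at hf
  exact Finset.mem_filter.mp hf |>.1

/-- Candidacy criterion: `e ∈ greedy (insert e A)` iff no element of the greedy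
matching of the heavier part of `A` conflicts with `e`. -/
lemma cand_iff_elig (hrefl : ∀ a, c a a) {A : Finset α} {e : α}
    (hinj : Set.InjOn w ↑(insert e A)) (he : e ∉ A) :
    e ∈ greedy w c (insert e A) ↔
      ∀ m ∈ greedy w c (A.filter fun f => w e < w f), ¬ c m e := by
  set t := w e with ht
  have hstep : (insert e A).filter (fun f => t ≤ w f) =
      insert e (A.filter fun f => t < w f) := by
    ext x
    simp only [Finset.mem_filter, Finset.mem_insert]
    constructor
    · rintro ⟨rfl | hx, h2⟩
      · exact Or.inl rfl
      · refine Or.inr ⟨hx, lt_of_le_of_ne h2 ?_⟩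
        intro habs
        exact he (by
          have : x = e := hinj (Finset.mem_insert_of_mem hx) (Finset.mem_insert_self e A)
            habs.symm
          rwa [← this])
    · rintro (rfl | ⟨hx, h2⟩)
      · exact ⟨Or.inl rfl, le_refl _⟩
      · exact ⟨Or.inr hx, le_of_lt h2⟩
  have hfe : e ∈ greedy w c (insert e A) ↔
      e ∈ greedy w c (insert e (A.filter fun f => t < w f)) := by
    rw [← hstep, greedy_filter w c hrefl hinj t]
    simp [Finset.mem_filter, ht]
  rw [hfe]
  apply mem_greedy_insert_min w c hrefl
  · apply hinj.mono
    intro x hx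
    simp only [Finset.coe_insert, Set.mem_insert_iff, Finset.mem_coe, Finset.mem_filter] at hx ⊢
    rcases hx with rfl | hx
    · exact Or.inl rfl
    · exact Or.inr hx.1
  · intro b hb
    exact (Finset.mem_filter.mp hb).2

end GreedyStruct
section ExpSubsets

variable {ι : Type*} [DecidableEq ι]

lemma expSubsets_empty (p : ℝ) (f : Finset ι → ℝ) :
    expSubsets p (∅ : Finset ι) f = f ∅ := by
  simp [expSubsets]

lemma expSubsets_congr {p : ℝ} {s : Finset ι} {f g : Finset ι → ℝ}
    (h : ∀ A ∈ s.powerset, f A = g A) : expSubsets p s f = expSubsets p s g := by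
  unfold expSubsets
  apply Finset.sum_congr rfl
  intro A hA
  rw [h A hA]

lemma expSubsets_insert (p : ℝ) {a : ι} {s : Finset ι} (ha : a ∉ s) (f : Finset ι → ℝ) :
    expSubsets p (insert a s) f =
      p * expSubsets p s (fun A => f (insert a A)) + (1 - p) * expSubsets p s f := by
  unfold expSubsets
  rw [Finset.powerset_insert, Finset.sum_union]
  · have h1 : ∑ A ∈ Finset.image (insert a) s.powerset,
        p ^ A.card * (1 - p) ^ ((insert a s).card - A.card) * f A =
        ∑ A ∈ s.powerset,
          p ^ (insert a A).card * (1 - p) ^ ((insert a s).card - (insert a A).card)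
            * f (insert a A) := by
      apply Finset.sum_image
      intro x hx y hy hxy
      have hxa : a ∉ x := fun h => ha (Finset.mem_powerset.mp hx h)
      have hya : a ∉ y := fun h => ha (Finset.mem_powerset.mp hy h)
      ext z
      constructor
      · intro hz
        have : z ∈ insert a y := hxy ▸ Finset.mem_insert_of_mem hz
        rcases Finset.mem_insert.mp this with rfl | h
        · exact absurd hz hxa
        · exact h
      · intro hz
        have : z ∈ insert a x := hxy ▸ Finset.mem_insert_of_mem hz
        rcases Finset.mem_insert.mp this with rfl | h
        · exact absurd hz hya
        · exact h
    rw [h1, Finset.mul_sum, Finset.mul_sum]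
    rw [add_comm]
    congr 1
    · apply Finset.sum_congr rfl
      intro A hA
      have hAs : A ⊆ s := Finset.mem_powerset.mp hA
      have haA : a ∉ A := fun h => ha (hAs h)
      have hc1 : (insert a A).card = A.card + 1 := Finset.card_insert_of_notMem haA
      have hc2 : (insert a s).card = s.card + 1 := Finset.card_insert_of_notMem ha
      have hle : A.card ≤ s.card := Finset.card_le_card hAs
      rw [hc1, hc2]
      have : s.card + 1 - (A.card + 1) = s.card - A.card := by omega
      rw [this, pow_succ]
      ring
    · apply Finset.sum_congr rfl
      intro A hA
      have hAs : A ⊆ s := Finset.mem_powerset.mp hA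
      have hle : A.card ≤ s.card := Finset.card_le_card hAs
      have hc2 : (insert a s).card = s.card + 1 := Finset.card_insert_of_notMem ha
      rw [hc2]
      have : s.card + 1 - A.card = (s.card - A.card) + 1 := by omega
      rw [this, pow_succ]
      ring
  · rw [Finset.disjoint_left]
    intro A hA hA'
    obtain ⟨B, hB, rfl⟩ := Finset.mem_image.mp hA'
    exact ha (Finset.mem_powerset.mp hA (Finset.mem_insert_self a B))

lemma expSubsets_const (p : ℝ) (s : Finset ι) (cst : ℝ) :
    expSubsets p s (fun _ => cst) = cst := by
  induction s using Finset.induction_on with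
  | empty => exact expSubsets_empty p _
  | @insert a s ha ih =>
    rw [expSubsets_insert p ha, ih]
    ring

lemma expSubsets_nonneg {p : ℝ} (hp0 : 0 ≤ p) (hp1 : p ≤ 1) {s : Finset ι}
    {f : Finset ι → ℝ} (hf : ∀ A ∈ s.powerset, 0 ≤ f A) : 0 ≤ expSubsets p s f := by
  apply Finset.sum_nonneg
  intro A hA
  have h0 := hf A hA
  have h1p : (0:ℝ) ≤ 1 - p := by linarith
  positivity

lemma expSubsets_mono {p : ℝ} (hp0 : 0 ≤ p) (hp1 : p ≤ 1) {s : Finset ι}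
    {f g : Finset ι → ℝ} (hfg : ∀ A ∈ s.powerset, f A ≤ g A) :
    expSubsets p s f ≤ expSubsets p s g := by
  apply Finset.sum_le_sum
  intro A hA
  have h1p : (0:ℝ) ≤ 1 - p := by linarith
  have h1 : (0:ℝ) ≤ p ^ A.card * (1 - p) ^ (s.card - A.card) := by positivity
  exact mul_le_mul_of_nonneg_left (hfg A hA) h1

lemma expSubsets_sum (p : ℝ) (s : Finset ι) {β : Type*} (t : Finset β)
    (g : β → Finset ι → ℝ) :
    expSubsets p s (fun A => ∑ e ∈ t, g e A) = ∑ e ∈ t, expSubsets p s (g e) := by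
  unfold expSubsets
  rw [Finset.sum_comm]
  apply Finset.sum_congr rfl
  intro A _
  rw [Finset.mul_sum]

lemma expSubsets_smul (p : ℝ) (s : Finset ι) (cst : ℝ) (f : Finset ι → ℝ) :
    expSubsets p s (fun A => cst * f A) = cst * expSubsets p s f := by
  unfold expSubsets
  rw [Finset.mul_sum]
  apply Finset.sum_congr rfl
  intro A _
  ring

lemma expSubsets_union (p : ℝ) {s t : Finset ι} (hst : Disjoint s t) (f : Finset ι → ℝ) :
    expSubsets p (s ∪ t) f =
      expSubsets p s (fun A => expSubsets p t (fun B => f (A ∪ B))) := by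
  induction s using Finset.induction_on generalizing f with
  | empty =>
    rw [Finset.empty_union, expSubsets_empty]
    apply expSubsets_congr
    intro B _
    rw [Finset.empty_union]
  | @insert a s ha ih =>
    have hds : Disjoint s t := by
      apply Finset.disjoint_of_subset_left _ hst
      exact Finset.subset_insert a s
    have hat : a ∉ t := by
      have := Finset.disjoint_left.mp hst (Finset.mem_insert_self a s)
      exact this
    have hast : a ∉ s ∪ t := by
      rw [Finset.mem_union]
      rintro (h | h)
      · exact ha h
      · exact hat h
    rw [Finset.insert_union, expSubsets_insert p hast, expSubsets_insert p ha,
      ih hds f, ih hds (fun A => f (insert a A))]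
    congr 1
    congr 1
    apply expSubsets_congr
    intro A _
    apply expSubsets_congr
    intro B _
    rw [Finset.insert_union]

end ExpSubsets
noncomputable def ind (P : Prop) : ℝ := if P then 1 else 0

lemma ind_nonneg (P : Prop) : 0 ≤ ind P := by
  unfold ind; split <;> norm_num

lemma ind_le_one (P : Prop) : ind P ≤ 1 := by
  unfold ind; split <;> norm_num

lemma ind_mono {P Q : Prop} (h : P → Q) : ind P ≤ ind Q := by
  unfold ind
  by_cases hP : P
  · rw [if_pos hP, if_pos (h hP)]
  · rw [if_neg hP]
    split <;> norm_num

lemma ind_congr {P Q : Prop} (h : P ↔ Q) : ind P = ind Q := by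
  unfold ind
  by_cases hP : P
  · rw [if_pos hP, if_pos (h.mp hP)]
  · rw [if_neg hP, if_neg (fun hQ => hP (h.mpr hQ))]

lemma ind_true {P : Prop} (h : P) : ind P = 1 := by unfold ind; rw [if_pos h]

lemma ind_false {P : Prop} (h : ¬P) : ind P = 0 := by unfold ind; rw [if_neg h]

lemma ind_and (P Q : Prop) : ind (P ∧ Q) = ind P * ind Q := by
  unfold ind
  by_cases hP : P <;> by_cases hQ : Q <;> simp [hP, hQ]

lemma gconf_refl {V : Type*} (e : V × V) : gconf e e := Or.inl rfl

lemma gconf_symm {V : Type*} {e f : V × V} (h : gconf e f) : gconf f e := by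
  unfold gconf at *
  tauto

lemma gconf_of_touch {V : Type*} {e f : V × V} {x : V}
    (he : e.1 = x ∨ e.2 = x) (hf : f.1 = x ∨ f.2 = x) : gconf e f := by
  unfold gconf
  rcases he with he | he <;> rcases hf with hf | hf <;> rw [he, hf] <;> tauto

section Prot

variable {V : Type*} [DecidableEq V]

/-- `f` touches a vertex of `T`. -/
def Touch (f : V × V) (T : Finset V) : Prop := f.1 ∈ T ∨ f.2 ∈ T

/-- No element of `L` outside the sample `S` is a candidate (relative to the heavier
context `B` plus the heavier part of the sample) touching `T`. -/
def NoCand (w : V × V → ℝ) (L B S : Finset (V × V)) (T : Finset V) : Prop :=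
  ∀ f ∈ L, f ∉ S →
    (∀ m ∈ greedy w gconf (B ∪ S.filter fun g => w f < w g), ¬ gconf m f) →
    ¬ Touch f T

lemma nocand_sample_insert (w : V × V → ℝ) {L' B S' : Finset (V × V)} {f₀ : V × V}
    (T : Finset V) (hS' : S' ⊆ L') (hf₀L' : f₀ ∉ L')
    (hmax : ∀ f ∈ L', w f < w f₀) :
    NoCand w (insert f₀ L') B (insert f₀ S') T ↔
      NoCand w L' (insert f₀ B) S' T := by
  have hctx : ∀ f ∈ L', (B ∪ (insert f₀ S').filter fun g => w f < w g) =
      ((insert f₀ B) ∪ S'.filter fun g => w f < w g) := by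
    intro f hf
    rw [Finset.filter_insert, if_pos (hmax f hf), Finset.union_insert, Finset.insert_union]
  constructor
  · intro H f hf hfS hElig
    have hne : f ≠ f₀ := fun h => hf₀L' (h ▸ hf)
    apply H f (Finset.mem_insert_of_mem hf)
      (by rw [Finset.mem_insert]; push_neg; exact ⟨hne, hfS⟩)
    rw [hctx f hf]
    exact hElig
  · intro H f hf hfS hElig
    rcases Finset.mem_insert.mp hf with rfl | hf'
    · exact absurd (Finset.mem_insert_self f S') hfS
    · apply H f hf' (fun h => hfS (Finset.mem_insert_of_mem h))
      rw [← hctx f hf']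
      exact hElig

lemma nocand_sample_skip (w : V × V → ℝ) {L' B S : Finset (V × V)} {f₀ : V × V}
    (T : Finset V) (hS : S ⊆ L') (hf₀L' : f₀ ∉ L')
    (hmax : ∀ f ∈ L', w f < w f₀) :
    NoCand w (insert f₀ L') B S T ↔
      (NoCand w L' B S T ∧
        ((∀ m ∈ greedy w gconf B, ¬ gconf m f₀) → ¬ Touch f₀ T)) := by
  have hfil : S.filter (fun g => w f₀ < w g) = ∅ := by
    apply Finset.filter_false_of_mem
    intro x hx
    exact not_lt.mpr (le_of_lt (hmax x (hS hx)))
  constructor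
  · intro H
    constructor
    · intro f hf hfS hElig
      exact H f (Finset.mem_insert_of_mem hf) hfS hElig
    · intro hElig
      apply H f₀ (Finset.mem_insert_self _ _) (fun h => hf₀L' (hS h))
      rw [hfil, Finset.union_empty]
      exact hElig
  · rintro ⟨H1, H2⟩ f hf hfS hElig
    rcases Finset.mem_insert.mp hf with rfl | hf'
    · apply H2
      rw [hfil, Finset.union_empty] at hElig
      exact hElig
    · exact H1 f hf' hfS hElig

/-- The protection lemma: with probability at least `p ^ |T|`, no candidate among the
light edges `L` touches the vertex set `T`. -/
lemma prot_main (w : V × V → ℝ) (E : Finset (V × V)) (hwinj : Set.InjOn w ↑E)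
    {p : ℝ} (hp0 : 0 ≤ p) (hp1 : p ≤ 1) :
    ∀ (n : ℕ) (L B : Finset (V × V)) (T : Finset V), L.card = n → L ⊆ E → B ⊆ E →
      (∀ f ∈ L, ∀ b ∈ B, w f < w b) →
      p ^ T.card ≤ expSubsets p L (fun S => ind (NoCand w L B S T)) := by
  intro n
  induction n with
  | zero =>
    intro L B T hcard _ _ _
    have hL : L = ∅ := Finset.card_eq_zero.mp hcard
    subst hL
    rw [expSubsets_empty, ind_true]
    · exact pow_le_one₀ hp0 hp1
    · intro f hf
      exact absurd hf (Finset.notMem_empty f)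
  | succ n ih =>
    intro L B T hcard hLE hBE hlight
    have hLne : L.Nonempty := Finset.card_pos.mp (by omega)
    obtain ⟨f₀, hf₀L, hf₀max⟩ := L.exists_max_image w hLne
    set L' := L.erase f₀ with hL'
    have hf₀L' : f₀ ∉ L' := Finset.notMem_erase f₀ L
    have hLins : L = insert f₀ L' := (Finset.insert_erase hf₀L).symm
    have hL'card : L'.card = n := by
      rw [hL', Finset.card_erase_of_mem hf₀L, hcard]
      omega
    have hL'E : L' ⊆ E := fun x hx => hLE (Finset.erase_subset f₀ L hx)
    have hmaxstrict : ∀ f ∈ L', w f < w f₀ := by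
      intro f hf
      have h1 : w f ≤ w f₀ := hf₀max f (Finset.erase_subset f₀ L hf)
      have h2 : f ≠ f₀ := Finset.ne_of_mem_erase hf
      exact lt_of_le_of_ne h1 (fun h => h2 (hwinj (hL'E hf) (hLE hf₀L) h))
    have hlight' : ∀ f ∈ L', ∀ b ∈ insert f₀ B, w f < w b := by
      intro f hf b hb
      rcases Finset.mem_insert.mp hb with rfl | hb'
      · exact hmaxstrict f hf
      · exact hlight f (Finset.erase_subset f₀ L hf) b hb'
    have hf₀E : f₀ ∈ E := hLE hf₀L
    have hBE' : insert f₀ B ⊆ E := by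
      intro x hx
      rcases Finset.mem_insert.mp hx with rfl | hx'
      · exact hf₀E
      · exact hBE hx'
    rw [hLins, expSubsets_insert p hf₀L']
    by_cases hcase : (∀ m ∈ greedy w gconf B, ¬ gconf m f₀) ∧ Touch f₀ T
    · -- bad case: f₀ is an eligible edge touching T
      obtain ⟨hElig, hTouch⟩ := hcase
      -- the vertex of T touched by f₀
      obtain ⟨x, hxT, hxf₀⟩ : ∃ x ∈ T, f₀.1 = x ∨ f₀.2 = x := by
        rcases hTouch with h | h
        · exact ⟨f₀.1, h, Or.inl rfl⟩
        · exact ⟨f₀.2, h, Or.inr rfl⟩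
      set T' := T.filter (fun y => ¬ (f₀.1 = y ∨ f₀.2 = y)) with hT'
      have hT'card : T'.card < T.card := by
        apply Finset.card_lt_card
        rw [hT', Finset.filter_ssubset]
        exact ⟨x, hxT, not_not_intro hxf₀⟩
      -- f₀ is in the greedy matching of `insert f₀ B`
      have hinj₀ : Set.InjOn w ↑(insert f₀ B) := hwinj.mono (by exact_mod_cast hBE')
      have hf₀greedy : f₀ ∈ greedy w gconf (insert f₀ B) := by
        rw [mem_greedy_insert_min w gconf gconf_refl hinj₀
          (fun b hb => hlight f₀ hf₀L b hb)]
        exact hElig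
      -- pointwise comparison on the `f₀ ∈ S` branch
      have hpoint : ∀ S' ∈ L'.powerset,
          ind (NoCand w L' (insert f₀ B) S' T') ≤
            ind (NoCand w (insert f₀ L') B (insert f₀ S') T) := by
        intro S' hS'
        have hS'sub : S' ⊆ L' := Finset.mem_powerset.mp hS'
        rw [nocand_sample_insert w T hS'sub hf₀L' hmaxstrict]
        apply ind_mono
        intro H f hf hfS hEligf hTf
        -- f is a candidate touching T; show contradiction with T'-protection
        have hnotT' : ¬ Touch f T' := H f hf hfS hEligf
        -- the touched vertex of T is dead (touched by f₀)
        have hdead : ∀ y ∈ T, (f.1 = y ∨ f.2 = y) → (f₀.1 = y ∨ f₀.2 = y) := by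
          intro y hyT hfy
          by_contra hy
          apply hnotT'
          have hyT' : y ∈ T' := Finset.mem_filter.mpr ⟨hyT, hy⟩
          rcases hfy with h | h
          · exact Or.inl (h ▸ hyT')
          · exact Or.inr (h ▸ hyT')
        -- f₀ survives in the greedy matching of the context of f
        have hctxinj : Set.InjOn w ↑((insert f₀ B) ∪ S'.filter fun g => w f < w g) := by
          apply hwinj.mono
          intro z hz
          rw [Finset.coe_union, Set.mem_union] at hz
          rcases hz with hz | hz
          · exact hBE' hz
          · exact hL'E (hS'sub (Finset.filter_subset _ _ (by exact_mod_cast hz)))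
        have hf₀ctx : f₀ ∈ greedy w gconf ((insert f₀ B) ∪ S'.filter fun g => w f < w g) := by
          apply mem_greedy_union_lighter w gconf gconf_refl hctxinj
            (t := w f₀) ?_ ?_ hf₀greedy
          · intro b hb
            rcases Finset.mem_insert.mp hb with rfl | hb'
            · exact le_refl _
            · exact le_of_lt (hlight f₀ hf₀L b hb')
          · intro s hs
            exact hmaxstrict s (hS'sub (Finset.filter_subset _ _ hs))
        -- f conflicts with f₀, contradicting eligibility of f
        rcases hTf with h | h
        · exact hEligf f₀ hf₀ctx (gconf_of_touch (hdead f.1 h (Or.inl rfl)) (Or.inl rfl))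
        · exact hEligf f₀ hf₀ctx (gconf_of_touch (hdead f.2 h (Or.inr rfl)) (Or.inr rfl))
      calc p ^ T.card ≤ p ^ (T'.card + 1) := by
            apply pow_le_pow_of_le_one hp0 hp1
            omega
        _ = p * p ^ T'.card := by ring
        _ ≤ p * expSubsets p L' (fun S' => ind (NoCand w L' (insert f₀ B) S' T')) := by
            apply mul_le_mul_of_nonneg_left _ hp0
            exact ih L' (insert f₀ B) T' hL'card hL'E hBE' hlight'
        _ ≤ p * expSubsets p L'
              (fun S' => ind (NoCand w (insert f₀ L') B (insert f₀ S') T)) := by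
            apply mul_le_mul_of_nonneg_left _ hp0
            exact expSubsets_mono hp0 hp1 hpoint
        _ ≤ p * expSubsets p L'
              (fun S' => ind (NoCand w (insert f₀ L') B (insert f₀ S') T)) +
            (1 - p) * expSubsets p L'
              (fun S => ind (NoCand w (insert f₀ L') B S T)) := by
            have h1 : (0:ℝ) ≤ 1 - p := by linarith
            have h2 : 0 ≤ expSubsets p L'
                (fun S => ind (NoCand w (insert f₀ L') B S T)) :=
              expSubsets_nonneg hp0 hp1 (fun A _ => ind_nonneg _)
            nlinarith
    · -- good case
      have himp : (∀ m ∈ greedy w gconf B, ¬ gconf m f₀) → ¬ Touch f₀ T := by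
        intro h1 h2
        exact hcase ⟨h1, h2⟩
      have heq1 : ∀ S' ∈ L'.powerset,
          ind (NoCand w (insert f₀ L') B (insert f₀ S') T) =
            ind (NoCand w L' (insert f₀ B) S' T) := by
        intro S' hS'
        exact ind_congr (nocand_sample_insert w T (Finset.mem_powerset.mp hS') hf₀L'
          hmaxstrict)
      have heq2 : ∀ S ∈ L'.powerset,
          ind (NoCand w (insert f₀ L') B S T) = ind (NoCand w L' B S T) := by
        intro S hS
        rw [ind_congr (nocand_sample_skip w T (Finset.mem_powerset.mp hS) hf₀L'
          hmaxstrict)]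
        rw [ind_and, ind_true himp, mul_one]
      rw [expSubsets_congr heq1, expSubsets_congr heq2]
      have h1 := ih L' (insert f₀ B) T hL'card hL'E hBE' hlight'
      have h2 := ih L' B T hL'card hL'E hBE
        (fun f hf b hb => hlight f (Finset.erase_subset f₀ L hf) b hb)
      have h1p : (0:ℝ) ≤ 1 - p := by linarith
      nlinarith

end Prot
section PerEdge

variable {V : Type*} [DecidableEq V]

/-- `e` is a candidate for the sample `A`. -/
def candEv (w : V × V → ℝ) (A : Finset (V × V)) (e : V × V) : Prop :=
  e ∉ A ∧ e ∈ greedy w gconf (insert e A)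

/-- `e` is a protected candidate: no lighter adjacent candidate exists. -/
def protEv (w : V × V → ℝ) (E A : Finset (V × V)) (e : V × V) : Prop :=
  candEv w A e ∧ ∀ f ∈ E, candEv w A f → f ≠ e → gconf f e → w e < w f

/-- Lemma A: a candidate is protected with probability at least `p ^ 2`. -/
lemma lemA (w : V × V → ℝ) (E : Finset (V × V)) (hwinj : Set.InjOn w ↑E)
    {p : ℝ} (hp0 : 0 ≤ p) (hp1 : p ≤ 1) {e : V × V} (heE : e ∈ E) (hee : e.1 ≠ e.2) :
    p ^ 2 * expSubsets p E (fun A => ind (candEv w A e)) ≤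
      expSubsets p E (fun A => ind (protEv w E A e)) := by
  classical
  set H := E.filter (fun f => w e < w f) with hH
  set L := E.filter (fun f => w f < w e) with hL
  set T : Finset V := {e.1, e.2} with hT
  have hTcard : T.card = 2 := by
    rw [hT, Finset.card_insert_of_notMem (by simpa using hee), Finset.card_singleton]
  have heH : e ∉ H := by
    rw [hH, Finset.mem_filter]
    rintro ⟨-, h⟩
    exact lt_irrefl _ h
  have heL : e ∉ L := by
    rw [hL, Finset.mem_filter]
    rintro ⟨-, h⟩
    exact lt_irrefl _ h
  have hHE : H ⊆ E := Finset.filter_subset _ _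
  have hLE : L ⊆ E := Finset.filter_subset _ _
  have hEeq : H ∪ insert e L = E := by
    ext x
    simp only [Finset.mem_union, Finset.mem_insert, hH, hL, Finset.mem_filter]
    constructor
    · rintro (⟨h, _⟩ | rfl | ⟨h, _⟩) <;> first | exact h | exact heE
    · intro hx
      by_cases hxe : x = e
      · exact Or.inr (Or.inl hxe)
      · have : w x ≠ w e := fun h => hxe (hwinj hx heE h)
        rcases this.lt_or_gt with h | h
        · exact Or.inr (Or.inr ⟨hx, h⟩)
        · exact Or.inl ⟨hx, h⟩
  have hdisj : Disjoint H (insert e L) := by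
    rw [Finset.disjoint_left]
    intro x hxH hxL
    rcases Finset.mem_insert.mp hxL with rfl | hxL'
    · exact heH hxH
    · have h1 := (Finset.mem_filter.mp hxH).2
      have h2 := (Finset.mem_filter.mp hxL').2
      exact absurd h1 (not_lt.mpr (le_of_lt h2))
  -- the candidate event in factorized form
  have hcand_iff : ∀ AH ∈ H.powerset, ∀ AL ∈ L.powerset,
      (candEv w (AH ∪ AL) e ↔ ∀ m ∈ greedy w gconf AH, ¬ gconf m e) := by
    intro AH hAH AL hAL
    have hAHsub : AH ⊆ H := Finset.mem_powerset.mp hAH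
    have hALsub : AL ⊆ L := Finset.mem_powerset.mp hAL
    have heA : e ∉ AH ∪ AL := by
      rw [Finset.mem_union]
      rintro (h | h)
      · exact heH (hAHsub h)
      · exact heL (hALsub h)
    have hfil : (AH ∪ AL).filter (fun f => w e < w f) = AH := by
      ext x
      simp only [Finset.mem_filter, Finset.mem_union]
      constructor
      · rintro ⟨h1 | h1, h2⟩
        · exact h1
        · have := (Finset.mem_filter.mp (hALsub h1)).2
          exact absurd h2 (not_lt.mpr (le_of_lt this))
      · intro hx
        exact ⟨Or.inl hx, (Finset.mem_filter.mp (hAHsub hx)).2⟩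
    have hinj : Set.InjOn w ↑(insert e (AH ∪ AL)) := by
      apply hwinj.mono
      intro z hz
      simp only [Finset.coe_insert, Set.mem_insert_iff, Finset.mem_coe,
        Finset.mem_union] at hz
      rcases hz with rfl | h | h
      · exact heE
      · exact hHE (hAHsub h)
      · exact hLE (hALsub h)
    unfold candEv
    rw [cand_iff_elig w gconf gconf_refl hinj heA, hfil]
    simp only [heA, not_false_iff, true_and]
  -- the protection event in factorized form
  have hprot_iff : ∀ AH ∈ H.powerset, ∀ AL ∈ L.powerset,
      (protEv w E (AH ∪ AL) e ↔
        ((∀ m ∈ greedy w gconf AH, ¬ gconf m e) ∧ NoCand w L AH AL T)) := by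
    intro AH hAH AL hAL
    have hAHsub : AH ⊆ H := Finset.mem_powerset.mp hAH
    have hALsub : AL ⊆ L := Finset.mem_powerset.mp hAL
    have hcand := hcand_iff AH hAH AL hAL
    -- candidacy of a lighter edge f in factorized form
    have hcandf : ∀ f ∈ L, (candEv w (AH ∪ AL) f ↔
        (f ∉ AL ∧ ∀ m ∈ greedy w gconf (AH ∪ AL.filter fun g => w f < w g),
          ¬ gconf m f)) := by
      intro f hf
      have hwf : w f < w e := (Finset.mem_filter.mp hf).2
      have hfH : f ∉ AH := by
        intro h
        have := (Finset.mem_filter.mp (hAHsub h)).2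
        exact absurd (lt_trans hwf this) (lt_irrefl _)
      have hfil : (AH ∪ AL).filter (fun g => w f < w g) =
          AH ∪ AL.filter (fun g => w f < w g) := by
        ext x
        simp only [Finset.mem_filter, Finset.mem_union]
        constructor
        · rintro ⟨h1 | h1, h2⟩
          · exact Or.inl h1
          · exact Or.inr ⟨h1, h2⟩
        · rintro (h | ⟨h1, h2⟩)
          · refine ⟨Or.inl h, ?_⟩
            have := (Finset.mem_filter.mp (hAHsub h)).2
            exact lt_trans hwf this
          · exact ⟨Or.inr h1, h2⟩
      have hinj : Set.InjOn w ↑(insert f (AH ∪ AL)) := by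
        apply hwinj.mono
        intro z hz
        simp only [Finset.coe_insert, Set.mem_insert_iff, Finset.mem_coe,
          Finset.mem_union] at hz
        rcases hz with rfl | h | h
        · exact hLE hf
        · exact hHE (hAHsub h)
        · exact hLE (hALsub h)
      unfold candEv
      constructor
      · rintro ⟨hfA, hmem⟩
        have hfA' : f ∉ AL := fun h => hfA (Finset.mem_union_right _ h)
        rw [cand_iff_elig w gconf gconf_refl hinj hfA, hfil] at hmem
        exact ⟨hfA', hmem⟩
      · rintro ⟨hfA', hmem⟩
        have hfA : f ∉ AH ∪ AL := by
          rw [Finset.mem_union]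
          rintro (h | h)
          · exact hfH h
          · exact hfA' h
        rw [cand_iff_elig w gconf gconf_refl hinj hfA, hfil]
        exact ⟨hfA, hmem⟩
    have htouch : ∀ f : V × V, (Touch f T ↔ gconf f e) := by
      intro f
      unfold Touch gconf
      rw [hT]
      simp only [Finset.mem_insert, Finset.mem_singleton]
      tauto
    unfold protEv
    rw [hcand]
    constructor
    · rintro ⟨h1, h2⟩
      refine ⟨h1, ?_⟩
      intro f hf hfS hElig hTf
      have hwf : w f < w e := (Finset.mem_filter.mp hf).2
      have hfe : f ≠ e := fun h => absurd (h ▸ hwf) (lt_irrefl _)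
      have hcf : candEv w (AH ∪ AL) f := (hcandf f hf).mpr ⟨hfS, hElig⟩
      have := h2 f (hLE hf) hcf hfe ((htouch f).mp hTf)
      exact absurd (lt_trans hwf this) (lt_irrefl _)
    · rintro ⟨h1, h2⟩
      refine ⟨h1, ?_⟩
      intro f hfE hcf hfe hconf
      by_contra hnlt
      have hwfe : w f ≠ w e := fun h => hfe (hwinj hfE heE h)
      have hwf : w f < w e := by
        rcases hwfe.lt_or_gt with h | h
        · exact h
        · exact absurd h hnlt
      have hfL : f ∈ L := by
        rw [hL, Finset.mem_filter]
        exact ⟨hfE, hwf⟩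
      obtain ⟨hfS, hElig⟩ := (hcandf f hfL).mp hcf
      exact h2 f hfL hfS hElig ((htouch f).mpr hconf)
  -- now factorize the expectations
  have hsplit : ∀ f : Finset (V × V) → ℝ,
      expSubsets p E f = expSubsets p H (fun A => expSubsets p (insert e L) (fun B => f (A ∪ B))) := by
    intro f
    rw [← expSubsets_union p hdisj f, hEeq]
  rw [hsplit (fun A => ind (candEv w A e)), hsplit (fun A => ind (protEv w E A e))]
  have hmain : ∀ AH ∈ H.powerset,
      p ^ 2 * expSubsets p (insert e L) (fun B => ind (candEv w (AH ∪ B) e)) ≤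
        expSubsets p (insert e L) (fun B => ind (protEv w E (AH ∪ B) e)) := by
    intro AH hAH
    have hAHsub : AH ⊆ H := Finset.mem_powerset.mp hAH
    rw [expSubsets_insert p heL, expSubsets_insert p heL]
    -- the branches where e is sampled vanish
    have hzero1 : expSubsets p L (fun AL => ind (candEv w (AH ∪ insert e AL) e)) = 0 := by
      rw [expSubsets_congr (g := fun _ => (0:ℝ)), expSubsets_const]
      intro AL _
      apply ind_false
      intro hc
      exact hc.1 (Finset.mem_union_right _ (Finset.mem_insert_self _ _))
    have hzero2 : expSubsets p L (fun AL => ind (protEv w E (AH ∪ insert e AL) e)) = 0 := by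
      rw [expSubsets_congr (g := fun _ => (0:ℝ)), expSubsets_const]
      intro AL _
      apply ind_false
      intro hc
      exact hc.1.1 (Finset.mem_union_right _ (Finset.mem_insert_self _ _))
    rw [hzero1, hzero2, mul_zero, zero_add, zero_add]
    -- rewrite both sides using the factorized events
    have hrw1 : expSubsets p L (fun AL => ind (candEv w (AH ∪ AL) e)) =
        ind (∀ m ∈ greedy w gconf AH, ¬ gconf m e) := by
      rw [expSubsets_congr (g := fun _ => ind (∀ m ∈ greedy w gconf AH, ¬ gconf m e))
        (fun AL hAL => ind_congr (hcand_iff AH hAH AL hAL)), expSubsets_const]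
    have hrw2 : expSubsets p L (fun AL => ind (protEv w E (AH ∪ AL) e)) =
        ind (∀ m ∈ greedy w gconf AH, ¬ gconf m e) *
          expSubsets p L (fun AL => ind (NoCand w L AH AL T)) := by
      rw [expSubsets_congr
        (g := fun AL => ind (∀ m ∈ greedy w gconf AH, ¬ gconf m e) * ind (NoCand w L AH AL T))
        (fun AL hAL => by
          show ind (protEv w E (AH ∪ AL) e) =
            ind (∀ m ∈ greedy w gconf AH, ¬ gconf m e) * ind (NoCand w L AH AL T)
          rw [← ind_and]
          exact ind_congr (hprot_iff AH hAH AL hAL)), expSubsets_smul]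
    rw [hrw1, hrw2]
    by_cases hElig : ∀ m ∈ greedy w gconf AH, ¬ gconf m e
    · rw [ind_true hElig, one_mul]
      have hpm := prot_main w E hwinj hp0 hp1 L.card L AH T rfl hLE
        (fun x hx => hHE (hAHsub hx))
        (fun f hf b hb => lt_trans (Finset.mem_filter.mp hf).2
          (Finset.mem_filter.mp (hAHsub hb)).2)
      rw [hTcard] at hpm
      have h1p : (0:ℝ) ≤ 1 - p := by linarith
      nlinarith [expSubsets_nonneg hp0 hp1
        (fun A (_ : A ∈ L.powerset) => ind_nonneg (NoCand w L AH A T))]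
    · rw [ind_false hElig]
      simp
  calc p ^ 2 * expSubsets p H (fun AH =>
          expSubsets p (insert e L) (fun B => ind (candEv w (AH ∪ B) e)))
      = expSubsets p H (fun AH =>
          p ^ 2 * expSubsets p (insert e L) (fun B => ind (candEv w (AH ∪ B) e))) := by
        rw [expSubsets_smul]
    _ ≤ expSubsets p H (fun AH =>
          expSubsets p (insert e L) (fun B => ind (protEv w E (AH ∪ B) e))) :=
        expSubsets_mono hp0 hp1 hmain

/-- The flip identity relating greedy membership and candidacy. -/
lemma flip_identity (w : V × V → ℝ) (E : Finset (V × V)) {p : ℝ} {e : V × V} (heE : e ∈ E) :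
    (1 - p) * expSubsets p E (fun A => ind (e ∈ greedy w gconf A)) =
      p * expSubsets p E (fun A => ind (candEv w A e)) := by
  classical
  set s := E.erase e with hs
  have hes : e ∉ s := Finset.notMem_erase e E
  have hEeq : E = insert e s := (Finset.insert_erase heE).symm
  rw [hEeq]
  rw [expSubsets_insert p hes, expSubsets_insert p hes]
  have hzero1 : expSubsets p s (fun A => ind (e ∈ greedy w gconf A)) = 0 := by
    rw [expSubsets_congr (g := fun _ => (0:ℝ)), expSubsets_const]
    intro A hA
    apply ind_false
    intro hc
    have : e ∈ A := greedy_subset w gconf gconf_refl A hc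
    exact hes (Finset.mem_powerset.mp hA this)
  have hzero2 : expSubsets p s (fun A => ind (candEv w (insert e A) e)) = 0 := by
    rw [expSubsets_congr (g := fun _ => (0:ℝ)), expSubsets_const]
    intro A _
    apply ind_false
    intro hc
    exact hc.1 (Finset.mem_insert_self _ _)
  have heq : expSubsets p s (fun A => ind (candEv w A e)) =
      expSubsets p s (fun A => ind (e ∈ greedy w gconf (insert e A))) := by
    apply expSubsets_congr
    intro A hA
    apply ind_congr
    unfold candEv
    have : e ∉ A := fun h => hes (Finset.mem_powerset.mp hA h)
    simp [this]
  rw [hzero1, hzero2, heq]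
  ring

end PerEdge
section Run

variable {V : Type*} [DecidableEq V]

lemma stepE_subset (w : V × V → ℝ) (E' M : Finset (V × V)) (e : V × V) :
    M ⊆ stepE w E' M e := Finset.subset_union_left

lemma foldl_stepE_subset (w : V × V → ℝ) (E' : Finset (V × V)) :
    ∀ (l : List (V × V)) (M₀ : Finset (V × V)), M₀ ⊆ l.foldl (stepE w E') M₀ := by
  intro l
  induction l with
  | nil => intro M₀; exact Finset.Subset.refl _
  | cons hd tl ih =>
    intro M₀
    exact subset_trans (stepE_subset w E' M₀ hd) (ih _)

lemma mem_stepE {w : V × V → ℝ} {E' M : Finset (V × V)} {e x : V × V}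
    (hx : x ∈ stepE w E' M e) :
    x ∈ M ∨ (x = e ∧ x ∈ greedy w gconf (insert x E') ∧ ∀ g ∈ M, ¬ gconf g x) := by
  rcases Finset.mem_union.mp hx with h | h
  · exact Or.inl h
  · rw [Finset.mem_filter] at h
    obtain ⟨hg, rfl, hconf⟩ := h
    exact Or.inr ⟨rfl, hg, hconf⟩

lemma mem_foldl_stepE (w : V × V → ℝ) (E' : Finset (V × V)) :
    ∀ (l : List (V × V)) (M₀ : Finset (V × V)) (x : V × V),
      x ∈ l.foldl (stepE w E') M₀ →
      x ∈ M₀ ∨ (x ∈ l ∧ x ∈ greedy w gconf (insert x E')) := by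
  intro l
  induction l with
  | nil => intro M₀ x hx; exact Or.inl hx
  | cons hd tl ih =>
    intro M₀ x hx
    rcases ih (stepE w E' M₀ hd) x hx with h | h
    · rcases mem_stepE h with h' | ⟨rfl, hg, _⟩
      · exact Or.inl h'
      · exact Or.inr ⟨List.mem_cons_self, hg⟩
    · exact Or.inr ⟨List.mem_cons_of_mem _ h.1, h.2⟩

lemma stepE_matching {w : V × V → ℝ} {E' M : Finset (V × V)} {e : V × V}
    (hM : isMatching gconf M) : isMatching gconf (stepE w E' M e) := by
  intro a ha b hb hne
  rcases mem_stepE ha with haM | ⟨hae, _, haconf⟩ <;>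
    rcases mem_stepE hb with hbM | ⟨hbe, _, hbconf⟩
  · exact hM a haM b hbM hne
  · intro hconf
    exact hbconf a haM hconf
  · intro hconf
    exact haconf b hbM (gconf_symm hconf)
  · exact absurd (hae.trans hbe.symm) hne

lemma foldl_stepE_matching (w : V × V → ℝ) (E' : Finset (V × V)) :
    ∀ (l : List (V × V)) (M₀ : Finset (V × V)), isMatching gconf M₀ →
      isMatching gconf (l.foldl (stepE w E') M₀) := by
  intro l
  induction l with
  | nil => intro M₀ h; exact h
  | cons hd tl ih =>
    intro M₀ h
    exact ih _ (stepE_matching h)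

lemma foldl_stepE_maximal (w : V × V → ℝ) (E' : Finset (V × V)) :
    ∀ (l : List (V × V)) (M₀ : Finset (V × V)) (x : V × V), x ∈ l →
      x ∈ greedy w gconf (insert x E') →
      ∃ m ∈ l.foldl (stepE w E') M₀, gconf m x := by
  intro l
  induction l with
  | nil => intro M₀ x hx; exact absurd hx List.not_mem_nil
  | cons hd tl ih =>
    intro M₀ x hx hg
    rcases List.mem_cons.mp hx with rfl | hx'
    · by_cases hc : ∀ g ∈ M₀, ¬ gconf g x
      · have hmem : x ∈ stepE w E' M₀ x := by
          apply Finset.mem_union_right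
          rw [Finset.mem_filter]
          exact ⟨hg, rfl, hc⟩
        exact ⟨x, foldl_stepE_subset w E' tl _ hmem, gconf_refl x⟩
      · push_neg at hc
        obtain ⟨g, hgM, hgc⟩ := hc
        refine ⟨g, ?_, hgc⟩
        exact foldl_stepE_subset w E' tl _ (stepE_subset w E' M₀ x hgM)
    · exact ih _ x hx' hg

/-- Properties of the algorithm's output matching. -/
lemma runE_props (w : V × V → ℝ) (E : Finset (V × V)) (A : Finset (V × V))
    (σl : List (V × V)) (hσl : σl.Perm (E \ A).toList) :
    (∀ x ∈ runE w A σl, x ∈ E ∧ candEv w A x) ∧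
      isMatching gconf (runE w A σl) ∧
      (∀ f ∈ E, candEv w A f → ∃ m ∈ runE w A σl, gconf m f) := by
  have hmem : ∀ y : V × V, y ∈ σl ↔ (y ∈ E ∧ y ∉ A) := by
    intro y
    rw [hσl.mem_iff, Finset.mem_toList, Finset.mem_sdiff]
  refine ⟨?_, ?_, ?_⟩
  · intro x hx
    rcases mem_foldl_stepE w A σl ∅ x hx with h | h
    · exact absurd h (Finset.notMem_empty x)
    · have := (hmem x).mp h.1
      exact ⟨this.1, this.2, h.2⟩
  · apply foldl_stepE_matching
    intro a ha
    exact absurd ha (Finset.notMem_empty a)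
  · intro f hfE hcand
    apply foldl_stepE_maximal w A σl ∅ f _ hcand.2
    rw [hmem f]
    exact ⟨hfE, hcand.1⟩

/-- Lemma B: the total weight of protected candidates is at most twice the weight of
any maximal matching of candidates. -/
lemma lemB (w : V × V → ℝ) (E A : Finset (V × V)) (hwinj : Set.InjOn w ↑E)
    (hw0 : ∀ e ∈ E, 0 ≤ w e) (M : Finset (V × V))
    (hME : ∀ x ∈ M, x ∈ E ∧ candEv w A x)
    (hmax : ∀ f ∈ E, candEv w A f → ∃ m ∈ M, gconf m f) :
    ∑ e ∈ E.filter (fun e => protEv w E A e), w e ≤ 2 * ∑ x ∈ M, w x := by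
  classical
  set P := E.filter (fun e => protEv w E A e) with hP
  have hchoice : ∀ e : V × V, ∃ m : V × V,
      e ∈ P → (m ∈ M ∧ gconf m e ∧ w e ≤ w m) := by
    intro e
    by_cases he : e ∈ P
    · rw [hP, Finset.mem_filter] at he
      obtain ⟨heE, hprot⟩ := he
      obtain ⟨m, hmM, hconf⟩ := hmax e heE hprot.1
      refine ⟨m, fun _ => ⟨hmM, hconf, ?_⟩⟩
      by_cases hme : m = e
      · rw [hme]
      · exact le_of_lt (hprot.2 m (hME m hmM).1 (hME m hmM).2 hme hconf)
    · exact ⟨e, fun h => absurd h he⟩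
  choose b hb using hchoice
  set κ : (V × V) → (V × V) × Bool :=
    fun e => (b e, if e.1 = (b e).1 ∨ e.2 = (b e).1 then true else false) with hκ
  -- each protected candidate shares a vertex with its blocker, indicated by the boolean
  have htouch : ∀ e ∈ P, (if e.1 = (b e).1 ∨ e.2 = (b e).1 then true else false) = true →
      (e.1 = (b e).1 ∨ e.2 = (b e).1) := by
    intro e _ h
    by_contra hc
    rw [if_neg hc] at h
    simp at h
  have htouch' : ∀ e ∈ P, (if e.1 = (b e).1 ∨ e.2 = (b e).1 then true else false) = false →
      (e.1 = (b e).2 ∨ e.2 = (b e).2) := by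
    intro e he h
    have hnot : ¬ (e.1 = (b e).1 ∨ e.2 = (b e).1) := by
      intro hc
      rw [if_pos hc] at h
      simp at h
    have hconf := (hb e he).2.1
    unfold gconf at hconf
    push_neg at hnot
    rcases hconf with h1 | h1 | h1 | h1
    · exact absurd h1.symm hnot.1
    · exact absurd h1.symm hnot.2
    · exact Or.inl h1.symm
    · exact Or.inr h1.symm
  -- two distinct protected candidates cannot conflict
  have hPnoconf : ∀ e ∈ P, ∀ e' ∈ P, e ≠ e' → ¬ gconf e e' := by
    intro e he e' he' hne hconf
    rw [hP, Finset.mem_filter] at he he'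
    have hwne : w e ≠ w e' := fun h => hne (hwinj he.1 he'.1 h)
    rcases hwne.lt_or_gt with h | h
    · exact absurd h (not_lt.mpr (le_of_lt
        (he'.2.2 e he.1 he.2.1 hne hconf)))
    · exact absurd h (not_lt.mpr (le_of_lt
        (he.2.2 e' he'.1 he'.2.1 (Ne.symm hne) (gconf_symm hconf))))
  have hinjκ : ∀ e ∈ P, ∀ e' ∈ P, κ e = κ e' → e = e' := by
    intro e he e' he' heq
    by_contra hne
    rw [hκ] at heq
    simp only [Prod.mk.injEq] at heq
    obtain ⟨hb_eq, hbool⟩ := heq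
    -- both touch the same vertex of the common blocker
    have : gconf e e' := by
      rcases hbool_cases : (if e.1 = (b e).1 ∨ e.2 = (b e).1 then true else false) with _ | _
      · have h1 := htouch' e he hbool_cases
        have h2 := htouch' e' he' (by rw [← hbool, hbool_cases])
        rw [hb_eq] at h1
        exact gconf_of_touch h1 h2
      · have h1 := htouch e he hbool_cases
        have h2 := htouch e' he' (by rw [← hbool, hbool_cases])
        rw [hb_eq] at h1
        exact gconf_of_touch h1 h2
    exact hPnoconf e he e' he' hne this
  calc ∑ e ∈ P, w e ≤ ∑ e ∈ P, w (κ e).1 := by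
        apply Finset.sum_le_sum
        intro e he
        exact (hb e he).2.2
    _ = ∑ y ∈ P.image κ, w y.1 :=
        (Finset.sum_image (f := fun y : (V × V) × Bool => w y.1) hinjκ).symm
    _ ≤ ∑ y ∈ M ×ˢ (Finset.univ : Finset Bool), w y.1 := by
        apply Finset.sum_le_sum_of_subset_of_nonneg
        · intro y hy
          obtain ⟨e, he, rfl⟩ := Finset.mem_image.mp hy
          rw [Finset.mem_product]
          exact ⟨(hb e he).1, Finset.mem_univ _⟩
        · intro y hy _
          rw [Finset.mem_product] at hy
          exact hw0 y.1 (hME y.1 hy.1).1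
    _ = 2 * ∑ x ∈ M, w x := by
        rw [Finset.sum_product, Finset.mul_sum]
        apply Finset.sum_congr rfl
        intro x _
        show ∑ _y : Bool, w x = 2 * w x
        rw [Finset.sum_const, Finset.card_univ, Fintype.card_bool, nsmul_eq_mul]
        norm_num

end Run
/-- Direct edge reimbursement: for the greedy-based edge-arrival algorithm with edge-sampling probability `p`, and every arrival-order rule of `E \ E'`, `E[w(M)] ≥ (p(1-p)/2) · E[w(Greedy(G[E']))]`. -/
theorem stmt15 {V : Type*} [DecidableEq V]
    (E : Finset (V × V)) (w : V × V → ℝ)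
    (hprop : ∀ e ∈ E, e.1 ≠ e.2) (hw0 : ∀ e ∈ E, 0 ≤ w e) (hwinj : Set.InjOn w ↑E)
    (p : ℝ) (hp : p ∈ Set.Icc (0 : ℝ) 1)
    (σ : Finset (V × V) → List (V × V))
    (hσ : ∀ A : Finset (V × V), (σ A).Perm (E \ A).toList) :
    expSubsets p E (fun E' => ∑ e ∈ runE w E' (σ E'), w e)
      ≥ (p * (1 - p) / 2) * expSubsets p E (fun E' => ∑ e ∈ greedy w gconf E', w e) := by
  classical
  obtain ⟨hp0, hp1⟩ := hp
  rw [ge_iff_le]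
  -- rewrite the greedy-weight expectation edge-by-edge
  have hgreedy_rw : expSubsets p E (fun A => ∑ e ∈ greedy w gconf A, w e)
      = ∑ e ∈ E, w e * expSubsets p E (fun A => ind (e ∈ greedy w gconf A)) := by
    have h1 : ∀ A ∈ E.powerset,
        (∑ e ∈ greedy w gconf A, w e) = ∑ e ∈ E, w e * ind (e ∈ greedy w gconf A) := by
      intro A hA
      have hsub : greedy w gconf A ⊆ E :=
        subset_trans (greedy_subset w gconf gconf_refl A) (Finset.mem_powerset.mp hA)
      have h2 : ∑ e ∈ E, w e * ind (e ∈ greedy w gconf A)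
          = ∑ e ∈ E.filter (fun e => e ∈ greedy w gconf A), w e := by
        rw [Finset.sum_filter]
        apply Finset.sum_congr rfl
        intro e _
        by_cases he : e ∈ greedy w gconf A
        · rw [ind_true he, if_pos he, mul_one]
        · rw [ind_false he, if_neg he, mul_zero]
      rw [h2, Finset.filter_mem_eq_inter, Finset.inter_eq_right.mpr hsub]
    rw [expSubsets_congr h1, expSubsets_sum]
    apply Finset.sum_congr rfl
    intro e _
    rw [← expSubsets_smul]
  -- per-sample application of the charging lemma
  have hstep1 : ∀ A ∈ E.powerset,
      (∑ e ∈ E, ((1:ℝ)/2 * w e) * ind (protEv w E A e)) ≤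
        ∑ e ∈ runE w A (σ A), w e := by
    intro A hA
    obtain ⟨h1, _, h3⟩ := runE_props w E A (σ A) (hσ A)
    have hB := lemB w E A hwinj hw0 (runE w A (σ A)) h1 h3
    have heq : (∑ e ∈ E, ((1:ℝ)/2 * w e) * ind (protEv w E A e))
        = (1/2) * ∑ e ∈ E.filter (fun e => protEv w E A e), w e := by
      rw [Finset.sum_filter, Finset.mul_sum]
      apply Finset.sum_congr rfl
      intro e _
      by_cases hpe : protEv w E A e
      · rw [ind_true hpe, if_pos hpe]; ring
      · rw [ind_false hpe, if_neg hpe]; ring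
    rw [heq]
    linarith
  have hstep2 : expSubsets p E (fun A => ∑ e ∈ E, ((1:ℝ)/2 * w e) * ind (protEv w E A e))
      ≤ expSubsets p E (fun A => ∑ e ∈ runE w A (σ A), w e) :=
    expSubsets_mono hp0 hp1 hstep1
  rw [expSubsets_sum] at hstep2
  -- per-edge comparison
  have hedge : ∀ e ∈ E,
      (p * (1 - p) / 2) * (w e * expSubsets p E (fun A => ind (e ∈ greedy w gconf A)))
        ≤ expSubsets p E (fun A => ((1:ℝ)/2 * w e) * ind (protEv w E A e)) := by
    intro e heE
    rw [expSubsets_smul]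
    have hA := lemA w E hwinj hp0 hp1 heE (hprop e heE)
    have hflip := flip_identity (p := p) w E heE
    have hwe : 0 ≤ w e := hw0 e heE
    set G := expSubsets p E (fun A => ind (e ∈ greedy w gconf A)) with hG
    set C := expSubsets p E (fun A => ind (candEv w A e)) with hC
    set Pr := expSubsets p E (fun A => ind (protEv w E A e)) with hPr
    have hkey : p * (1 - p) * G = p ^ 2 * C := by
      linear_combination p * hflip
    have hfin : p * (1 - p) / 2 * (w e * G) = (1/2 * w e) * (p ^ 2 * C) := by
      rw [← hkey]; ring
    rw [hfin]
    apply mul_le_mul_of_nonneg_left hA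
    positivity
  calc (p * (1 - p) / 2) * expSubsets p E (fun A => ∑ e ∈ greedy w gconf A, w e)
      = ∑ e ∈ E, (p * (1 - p) / 2) *
          (w e * expSubsets p E (fun A => ind (e ∈ greedy w gconf A))) := by
        rw [hgreedy_rw, Finset.mul_sum]
    _ ≤ ∑ e ∈ E, expSubsets p E (fun A => ((1:ℝ)/2 * w e) * ind (protEv w E A e)) :=
        Finset.sum_le_sum hedge
    _ ≤ expSubsets p E (fun A => ∑ e ∈ runE w A (σ A), w e) := hstep2
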